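/- arXiv:1704.01439 — 15 statements merged into one kernel-verified Lean document; each statement's English description precedes it below -/
import Mathlib

section
/- Let n ≥ 2 be a squarefree integer, let e' be a positive integer, and set e := n·e'. Assume e is not a perfect square and that the equation x² − e·y² = n has a solution in integers. Let (x₀, y₀) be the positive integer solution of x² − e·y² = n (with x₀ > 0 and y₀ > 0) for which x₀ is minimal. Then n divides x₀, n divides 2·x₀·y₀, and the pair ((x₀² + e·y₀²)/n, 2·x₀·y₀/n) is the fundamental solution of the Pell equation x² − e·y² = 1, i.e. it is the positive integer solution of x² − e·y² = 1 with minimal first coordinate. -/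
/-- If `n ≥ 2` is squarefree, `e = n·e'` is not a perfect square, and `(x₀, y₀)` is the
minimal positive solution of `x² − e·y² = n`, then `n ∣ x₀`, `n ∣ 2x₀y₀`, and
`((x₀² + e·y₀²)/n, 2x₀y₀/n)` is the fundamental solution of the Pell equation
`x² − e·y² = 1`. -/
theorem minimal_solution_gives_fundamental_pell
    (n : ℤ) (hn : 2 ≤ n) (hnsf : Squarefree n)
    (e' : ℤ) (he' : 0 < e') (e : ℤ) (he : e = n * e')
    (hensq : ¬ ∃ k : ℤ, e = k ^ 2)
    (x₀ y₀ : ℤ) (hx₀ : 0 < x₀) (hy₀ : 0 < y₀)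
    (hsol : x₀ ^ 2 - e * y₀ ^ 2 = n)
    (hmin : ∀ x y : ℤ, 0 < x → 0 < y → x ^ 2 - e * y ^ 2 = n → x₀ ≤ x) :
    n ∣ x₀ ∧ n ∣ 2 * x₀ * y₀ ∧
      ((x₀ ^ 2 + e * y₀ ^ 2) / n) ^ 2 - e * ((2 * x₀ * y₀) / n) ^ 2 = 1 ∧
      0 < (x₀ ^ 2 + e * y₀ ^ 2) / n ∧ 0 < (2 * x₀ * y₀) / n ∧
      ∀ a b : ℤ, 0 < a → 0 < b → a ^ 2 - e * b ^ 2 = 1 →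
        (x₀ ^ 2 + e * y₀ ^ 2) / n ≤ a := by
  subst he
  have hn0 : (0:ℤ) < n := by linarith
  have he0 : 0 < n * e' := by positivity
  have hx2 : n ∣ x₀ ^ 2 := ⟨1 + e' * y₀ ^ 2, by linear_combination hsol⟩
  have hdvd : n ∣ x₀ := (hnsf.dvd_pow_iff_dvd two_ne_zero).mp hx2
  obtain ⟨c, hc⟩ := hdvd
  subst hc
  have hc0 : 0 < c := by nlinarith
  have hkey : n * c ^ 2 - e' * y₀ ^ 2 = 1 := by
    have h2 : n * (n * c ^ 2 - e' * y₀ ^ 2) = n * 1 := by linear_combination hsol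
    exact mul_left_cancel₀ (ne_of_gt hn0) h2
  have hA : ((n * c) ^ 2 + n * e' * y₀ ^ 2) / n = 2 * n * c ^ 2 - 1 := by
    have h : (n * c) ^ 2 + n * e' * y₀ ^ 2 = n * (2 * n * c ^ 2 - 1) := by
      linear_combination (-n) * hkey
    rw [h, Int.mul_ediv_cancel_left _ (ne_of_gt hn0)]
  have hB : (2 * (n * c) * y₀) / n = 2 * c * y₀ := by
    have h : 2 * (n * c) * y₀ = n * (2 * c * y₀) := by ring
    rw [h, Int.mul_ediv_cancel_left _ (ne_of_gt hn0)]
  refine ⟨⟨c, rfl⟩, ⟨2 * c * y₀, by ring⟩, ?_, ?_, ?_, ?_⟩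
  · rw [hA, hB]
    linear_combination (4 * n * c ^ 2) * hkey
  · rw [hA]; nlinarith
  · rw [hB]; positivity
  · intro a b ha hb hab
    rw [hA]
    by_contra hcon
    push_neg at hcon
    have ha2 : 2 ≤ a := by nlinarith
    set x₁ := (n * c) * a - (n * e') * y₀ * b with hx1
    set y₁ := y₀ * a - (n * c) * b with hy1
    have hnorm : x₁ ^ 2 - (n * e') * y₁ ^ 2 = n := by
      linear_combination (a ^ 2 - n * e' * b ^ 2) * hsol + n * hab
    have hx1pos : 0 < x₁ := by
      have h1 : ((n * c) * a) ^ 2 - ((n * e') * y₀ * b) ^ 2 = n * a ^ 2 + n * e' * y₀ ^ 2 := by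
        linear_combination a ^ 2 * hsol + n * e' * y₀ ^ 2 * hab
      have h2 : 0 < n * a ^ 2 + n * e' * y₀ ^ 2 := by positivity
      nlinarith [mul_pos hx₀ ha, mul_pos (mul_pos he0 hy₀) hb]
    have h3 : ((n * e') * y₀ * b) ^ 2 - ((n * c) * (a - 1)) ^ 2
        = (a - 1) * (n * ((2 * n * c ^ 2 - 1) - a)) := by
      linear_combination (-(n * e' * y₀ ^ 2)) * hab - n * (a ^ 2 - 1) * hkey
    have hsq : ((n * c) * (a - 1)) ^ 2 < ((n * e') * y₀ * b) ^ 2 := by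
      have hpos : 0 < (a - 1) * (n * ((2 * n * c ^ 2 - 1) - a)) :=
        mul_pos (by linarith) (mul_pos hn0 (by linarith))
      linarith
    have hlt : (n * c) * a - (n * c) < (n * e') * y₀ * b := by
      nlinarith [mul_pos (mul_pos he0 hy₀) hb,
        mul_nonneg hx₀.le (by linarith : (0:ℤ) ≤ a - 1)]
    have hx1lt : x₁ < n * c := by rw [hx1]; linarith
    have hy1ne : y₁ ≠ 0 := by
      intro h0
      rw [h0] at hnorm
      simp only [ne_eq, OfNat.ofNat_ne_zero, not_false_eq_true, zero_pow, mul_zero,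
        sub_zero] at hnorm
      have hu : IsUnit x₁ := hnsf x₁ ⟨1, by linear_combination -hnorm⟩
      rw [Int.isUnit_iff] at hu
      rcases hu with h | h <;> rw [h] at hnorm <;> norm_num at hnorm <;> omega
    have habs : 0 < |y₁| := abs_pos.mpr hy1ne
    have hge := hmin x₁ |y₁| hx1pos habs (by rw [sq_abs]; exact hnorm)
    linarith
end

section
/- Let n be a positive squarefree integer, let e' be a positive integer, and set e := n·e'. Assume that the equation x² − e·y² = n has a solution in integers. Then for every integer t, the equation x² − e·y² = t·n has a solution in integers if and only if the equation x² − e·y² = t has a solution in integers. -/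
/-- If `n` is positive squarefree, `e = n·e'`, and `x² − e·y² = n` is solvable, then for
every integer `t`, the equation `x² − e·y² = t·n` is solvable iff `x² − e·y² = t` is. -/
theorem pell_tn_solvable_iff_t_solvable
    (n : ℤ) (hn : 0 < n) (hnsf : Squarefree n)
    (e' : ℤ) (he' : 0 < e') (e : ℤ) (he : e = n * e')
    (hsol : ∃ x y : ℤ, x ^ 2 - e * y ^ 2 = n) (t : ℤ) :
    (∃ x y : ℤ, x ^ 2 - e * y ^ 2 = t * n) ↔ (∃ x y : ℤ, x ^ 2 - e * y ^ 2 = t) := by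
  obtain ⟨u, v, huv⟩ := hsol
  have hnu : n ∣ u := by
    refine (Squarefree.dvd_pow_iff_dvd hnsf (two_ne_zero)).mp ?_
    have : u ^ 2 = n * (1 + e' * v ^ 2) := by rw [he] at huv; ring_nf; linarith [huv]
    exact ⟨_, this⟩
  constructor
  · rintro ⟨x, y, hxy⟩
    have hnx : n ∣ x := by
      refine (Squarefree.dvd_pow_iff_dvd hnsf (two_ne_zero)).mp ?_
      have : x ^ 2 = n * (t + e' * y ^ 2) := by rw [he] at hxy; ring_nf; linarith [hxy]
      exact ⟨_, this⟩
    obtain ⟨x', hx'⟩ := hnx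
    obtain ⟨u', hu'⟩ := hnu
    refine ⟨x' * u - e' * y * v, y * u' - x' * v, ?_⟩
    have hne : (n : ℤ) ≠ 0 := hn.ne'
    have key : ((x' * u - e' * y * v) ^ 2 - e * (y * u' - x' * v) ^ 2) * n ^ 2
        = (x ^ 2 - e * y ^ 2) * (u ^ 2 - e * v ^ 2) := by
      subst he; rw [hx', hu']; ring
    have : ((x' * u - e' * y * v) ^ 2 - e * (y * u' - x' * v) ^ 2) * n ^ 2
        = t * n ^ 2 := by rw [key, hxy, huv]; ring
    have := mul_right_cancel₀ (pow_ne_zero 2 hne) this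
    linarith
  · rintro ⟨x, y, hxy⟩
    refine ⟨x * u + e * y * v, x * v + y * u, ?_⟩
    have : (x * u + e * y * v) ^ 2 - e * (x * v + y * u) ^ 2
        = (x ^ 2 - e * y ^ 2) * (u ^ 2 - e * v ^ 2) := by ring
    rw [this, hxy, huv]
end

section
/- Let n be a positive squarefree integer with n ≡ 3 (mod 4), let e' be a positive integer, and set e := n·e'. Then the equations x² − e·y² = n and x² − e·y² = −n are not both solvable in integers. -/
/-- For `n` positive squarefree with `n ≡ 3 (mod 4)` and `e = n·e'`, the equations
`x² − e·y² = n` and `x² − e·y² = −n` are not both solvable in integers. -/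
theorem pell_n_and_neg_n_not_both_solvable
    (n : ℤ) (hn : 0 < n) (hnsf : Squarefree n) (hn4 : n % 4 = 3)
    (e' : ℤ) (he' : 0 < e') (e : ℤ) (he : e = n * e') :
    ¬ ((∃ x y : ℤ, x ^ 2 - e * y ^ 2 = n) ∧ (∃ x y : ℤ, x ^ 2 - e * y ^ 2 = -n)) := by
  rintro ⟨⟨x, y, hx⟩, ⟨u, v, hu⟩⟩
  subst he
  have hn0 : n ≠ 0 := hn.ne'
  -- n ∣ x and n ∣ u
  have hdx : n ∣ x := by
    refine (hnsf.dvd_pow_iff_dvd (n := 2) two_ne_zero).mp ⟨1 + e' * y ^ 2, by linarith [hx]⟩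
  have hdu : n ∣ u := by
    refine (hnsf.dvd_pow_iff_dvd (n := 2) two_ne_zero).mp ⟨-1 + e' * v ^ 2, by linarith [hu]⟩
  obtain ⟨x₁, rfl⟩ := hdx
  obtain ⟨u₁, rfl⟩ := hdu
  have h1 : n * x₁ ^ 2 - e' * y ^ 2 = 1 := by
    have : n * (n * x₁ ^ 2 - e' * y ^ 2) = n * 1 := by ring_nf; ring_nf at hx; linarith
    exact mul_left_cancel₀ hn0 this
  have h2 : n * u₁ ^ 2 - e' * v ^ 2 = -1 := by
    have : n * (n * u₁ ^ 2 - e' * v ^ 2) = n * (-1) := by ring_nf; ring_nf at hu; linarith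
    exact mul_left_cancel₀ hn0 this
  -- composition: A² - n e' B² = -1
  set A : ℤ := n * x₁ * u₁ + e' * y * v with hA
  set B : ℤ := x₁ * v + u₁ * y with hB
  have hkey : A ^ 2 + 1 = n * (e' * B ^ 2) := by
    have := congrArg₂ (· * ·) h1 h2
    rw [hA, hB]
    linear_combination this
  -- so n ∣ A² + 1, hence -1 is a square mod n.natAbs
  have hdvd : (n.natAbs : ℤ) ∣ A ^ 2 + 1 := by
    rw [Int.natAbs_dvd]; exact ⟨e' * B ^ 2, hkey⟩
  have hsq : IsSquare (-1 : ZMod n.natAbs) := by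
    refine ⟨(A : ZMod n.natAbs), ?_⟩
    have : ((A ^ 2 + 1 : ℤ) : ZMod n.natAbs) = 0 := by
      exact_mod_cast (ZMod.intCast_zmod_eq_zero_iff_dvd _ _).mpr hdvd
    push_cast at this
    linear_combination -this
  have hnsf' : Squarefree n.natAbs := Int.squarefree_natAbs.mpr hnsf
  have h43 : n.natAbs % 4 = 3 := by
    have : (n.natAbs : ℤ) = n := Int.natAbs_of_nonneg hn.le
    omega
  exact (ZMod.isSquare_neg_one_iff' hnsf').mp hsq dvd_rfl h43
end

section
/- Let n be a positive squarefree integer, let e' be a positive integer, and set e := n·e'. If the equation x² − e·y² = n has a solution in integers, then −e' is a square modulo n, i.e. there exists an integer z with z² ≡ −e' (mod n). Similarly, if x² − e·y² = −n has an integer solution, then e' is a square modulo n. -/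
/-- For `n` positive squarefree and `e = n·e'`: if `x² − e·y² = n` is solvable then `−e'`
is a square modulo `n`, and if `x² − e·y² = −n` is solvable then `e'` is a square
modulo `n`. -/
theorem pell_solvable_implies_square_mod
    (n : ℤ) (hn : 0 < n) (hnsf : Squarefree n)
    (e' : ℤ) (he' : 0 < e') (e : ℤ) (he : e = n * e') :
    ((∃ x y : ℤ, x ^ 2 - e * y ^ 2 = n) → ∃ z : ℤ, z ^ 2 ≡ -e' [ZMOD n]) ∧
    ((∃ x y : ℤ, x ^ 2 - e * y ^ 2 = -n) → ∃ z : ℤ, z ^ 2 ≡ e' [ZMOD n]) := by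
  have key : ∀ s : ℤ, (s = 1 ∨ s = -1) → (∃ x y : ℤ, x ^ 2 - e * y ^ 2 = s * n) →
      ∃ z : ℤ, z ^ 2 ≡ -s * e' [ZMOD n] := by
    rintro s hs ⟨x, y, hxy⟩
    have hndvd : n ∣ x ^ 2 := ⟨s + e' * y ^ 2, by rw [he] at hxy; linarith⟩
    have hnx : n ∣ x := (hnsf.dvd_pow_iff_dvd two_ne_zero).mp hndvd
    obtain ⟨k, rfl⟩ := hnx
    have hn0 : n ≠ 0 := hn.ne'
    have h2 : n * k ^ 2 - e' * y ^ 2 = s := by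
      have : n * (n * k ^ 2 - e' * y ^ 2) = n * s := by rw [he] at hxy; ring_nf; ring_nf at hxy; linarith
      exact mul_left_cancel₀ hn0 this
    refine ⟨e' * y, ?_⟩
    have : n ∣ (-s * e') - (e' * y) ^ 2 := ⟨-e' * k ^ 2, by nlinarith [h2]⟩
    exact (Int.modEq_iff_dvd.mpr this)
  constructor
  · intro h
    have := key 1 (Or.inl rfl) (by simpa using h)
    simpa using this
  · intro h
    have := key (-1) (Or.inr rfl) (by obtain ⟨x,y,hxy⟩ := h; exact ⟨x,y, by linarith⟩)
    simpa using this
end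

section
/- Let n be a positive squarefree integer with n ≡ 3 (mod 4), let e' be a positive integer, and set e := n·e'. If both the equation x² − e·y² = n and the equation x² − 4e·y² = −5n are solvable in integers, then 5 does not divide e (equivalently, 5 divides neither n nor e'). -/
private lemma jac_congr {a₁ a₂ : ℤ} (b : ℕ) (h : (b : ℤ) ∣ a₁ - a₂) :
    jacobiSym a₁ b = jacobiSym a₂ b :=
  jacobiSym.mod_left' (show a₁ % (b : ℤ) = a₂ % (b : ℤ) from
    Int.ModEq.symm (Int.modEq_iff_dvd.mpr (by simpa using h)))

private lemma key_jacobi (k e' y Y t : ℤ) (hk : 0 < k) (hk4 : k % 4 = 3)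
    (hy : IsCoprime y k) (hY : IsCoprime Y k) (ht : IsCoprime t 5)
    (h1 : k ∣ e' * y ^ 2 + 1) (h2 : k ∣ 4 * e' * Y ^ 2 - 5)
    (h3 : (5 : ℤ) ∣ k * t ^ 2 - 1 ∨ (5 : ℤ) ∣ k * t ^ 2 + 1) : False := by
  set K := k.toNat with hKdef
  have hK : (K : ℤ) = k := Int.toNat_of_nonneg hk.le
  have hK4 : K % 4 = 3 := by omega
  have hKodd : Odd K := Nat.odd_iff.mpr (by omega)
  have hy' : Int.gcd y (K : ℤ) = 1 := by
    rw [hK]; exact Int.isCoprime_iff_gcd_eq_one.mp hy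
  have hY' : Int.gcd Y (K : ℤ) = 1 := by
    rw [hK]; exact Int.isCoprime_iff_gcd_eq_one.mp hY
  have hgcd2 : Int.gcd 2 (K : ℤ) = 1 := by
    rw [hK]
    refine Int.isCoprime_iff_gcd_eq_one.mp ?_
    obtain ⟨j, hj⟩ : ∃ j, k = 4 * j + 3 := ⟨k / 4, by omega⟩
    exact ⟨-(2 * j + 1), 1, by omega⟩
  -- J(e' | K) = -1
  have he'K : jacobiSym e' K = -1 := by
    have c1 : jacobiSym (e' * y ^ 2) K = jacobiSym (-1) K :=
      jac_congr K (by rw [hK, sub_neg_eq_add]; exact h1)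
    have c2 : jacobiSym (e' * y ^ 2) K = jacobiSym e' K := by
      rw [jacobiSym.mul_left, jacobiSym.sq_one' hy', mul_one]
    have c3 : jacobiSym (-1) K = -1 := by
      rw [jacobiSym.at_neg_one hKodd, ZMod.χ₄_nat_three_mod_four hK4]
    rw [← c2, c1, c3]
  -- J(5 | K) = -1
  have h5K : jacobiSym 5 K = -1 := by
    have c1 : jacobiSym (4 * e' * Y ^ 2) K = jacobiSym 5 K :=
      jac_congr K (by rw [hK]; exact h2)
    have c2 : jacobiSym (4 * e' * Y ^ 2) K = jacobiSym e' K := by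
      have h4 : (4 * e' * Y ^ 2 : ℤ) = 2 ^ 2 * e' * Y ^ 2 := by ring
      rw [h4, jacobiSym.mul_left, jacobiSym.mul_left, jacobiSym.sq_one' hgcd2,
        jacobiSym.sq_one' hY', one_mul, mul_one]
    rw [← c1, c2, he'K]
  -- reciprocity : J(K | 5) = -1
  have hrec : jacobiSym (K : ℤ) 5 = -1 := by
    have h := jacobiSym.quadratic_reciprocity_one_mod_four (a := 5) (b := K)
      (by norm_num) hKodd
    have h5 : ((5 : ℕ) : ℤ) = (5 : ℤ) := by norm_num
    rw [h5] at h
    rw [← h, h5K]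
  -- but J(K | 5) = 1
  have ht' : Int.gcd t ((5 : ℕ) : ℤ) = 1 := by
    exact_mod_cast Int.isCoprime_iff_gcd_eq_one.mp ht
  have hone : jacobiSym (K : ℤ) 5 = 1 := by
    have c3 : jacobiSym (k * t ^ 2) 5 = jacobiSym (K : ℤ) 5 := by
      rw [jacobiSym.mul_left, jacobiSym.sq_one' ht', mul_one, hK]
    rw [← c3]
    rcases h3 with h | h
    · rw [jac_congr 5 (by exact_mod_cast h), jacobiSym.one_left]
    · rw [jac_congr (a₂ := -1) 5 (by rw [sub_neg_eq_add]; exact_mod_cast h),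
        jacobiSym.at_neg_one (by decide : Odd 5), ZMod.χ₄_nat_one_mod_four (by norm_num)]
  rw [hone] at hrec
  norm_num at hrec

/-- If `n` is positive squarefree, `n ≡ 3 (mod 4)`, `e = n·e'`, and both `x² − e·y² = n`
and `x² − 4e·y² = −5n` are solvable in integers, then `5 ∤ e`. -/
theorem five_not_dvd_e_of_both_pell_solvable
    (n : ℤ) (hn : 0 < n) (hnsf : Squarefree n) (hn4 : n % 4 = 3)
    (e' : ℤ) (he' : 0 < e') (e : ℤ) (he : e = n * e')
    (h1 : ∃ x y : ℤ, x ^ 2 - e * y ^ 2 = n)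
    (h2 : ∃ x y : ℤ, x ^ 2 - 4 * e * y ^ 2 = -5 * n) :
    ¬ (5 ∣ e) := by
  intro hdvd
  obtain ⟨x, y, hxy⟩ := h1
  obtain ⟨X, Y, hXY⟩ := h2
  rw [he] at hxy hXY hdvd
  have hn0 : n ≠ 0 := hn.ne'
  -- n divides x and X
  have hnx : n ∣ x := by
    refine (hnsf.dvd_pow_iff_dvd two_ne_zero).mp ⟨1 + e' * y ^ 2, by linear_combination hxy⟩
  have hnX : n ∣ X := by
    refine (hnsf.dvd_pow_iff_dvd two_ne_zero).mp ⟨4 * e' * Y ^ 2 - 5, by linear_combination hXY⟩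
  obtain ⟨x₁, hx₁⟩ := hnx
  obtain ⟨X₁, hX₁⟩ := hnX
  have E1 : n * x₁ ^ 2 - e' * y ^ 2 = 1 := by
    have h := mul_left_cancel₀ hn0
      (show n * (n * x₁ ^ 2 - e' * y ^ 2) = n * 1 by
        rw [hx₁] at hxy; linear_combination hxy)
    linarith
  have E2 : n * X₁ ^ 2 - 4 * e' * Y ^ 2 = -5 := by
    have h := mul_left_cancel₀ hn0
      (show n * (n * X₁ ^ 2 - 4 * e' * Y ^ 2) = n * (-5) by
        rw [hX₁] at hXY; linear_combination hXY)
    linarith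
  have h5 : Prime (5 : ℤ) := by norm_num
  by_cases h5n : (5 : ℤ) ∣ n
  · -- case 5 ∣ n : write n = 5 m
    obtain ⟨m, hm⟩ := h5n
    have hm0 : 0 < m := by nlinarith
    have hm4 : m % 4 = 3 := by omega
    have h5m : ¬ (5 : ℤ) ∣ m := by
      rintro ⟨m', hm'⟩
      have : IsUnit (5 : ℤ) := hnsf 5 ⟨m', by rw [hm, hm']; ring⟩
      rw [Int.isUnit_iff] at this
      omega
    have h5e' : ¬ (5 : ℤ) ∣ e' := by
      rintro ⟨f, hf⟩
      have : (5 : ℤ) ∣ 1 := ⟨m * x₁ ^ 2 - f * y ^ 2, by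
        rw [hm, hf] at E1; linear_combination -E1⟩
      norm_num at this
    -- 5 ∣ Y
    have h5Y : (5 : ℤ) ∣ Y := by
      have hd : (5 : ℤ) ∣ 4 * e' * Y ^ 2 :=
        ⟨m * X₁ ^ 2 + 1, by rw [hm] at E2; linear_combination -E2⟩
      rcases h5.dvd_mul.mp hd with h | h
      · rcases h5.dvd_mul.mp h with h | h
        · norm_num at h
        · exact absurd h h5e'
      · exact h5.dvd_of_dvd_pow h
    obtain ⟨Y₁, hY₁⟩ := h5Y
    have E2' : m * X₁ ^ 2 - 20 * e' * Y₁ ^ 2 = -1 := by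
      have h := mul_left_cancel₀ (by norm_num : (5 : ℤ) ≠ 0)
        (show (5 : ℤ) * (m * X₁ ^ 2 - 20 * e' * Y₁ ^ 2) = 5 * (-1) by
          rw [hm, hY₁] at E2; linear_combination E2)
      linarith
    refine key_jacobi m e' y Y X₁ hm0 hm4 ?_ ?_ ?_ ?_ ?_ (Or.inr ?_)
    · exact ⟨-(e' * y), 5 * x₁ ^ 2, by rw [hm] at E1; linear_combination E1⟩
    · -- IsCoprime Y m
      rw [Int.isCoprime_iff_gcd_eq_one]
      have d1 : (Int.gcd Y m : ℤ) ∣ Y := Int.gcd_dvd_left Y m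
      have d2 : (Int.gcd Y m : ℤ) ∣ m := Int.gcd_dvd_right Y m
      have hd5 : (Int.gcd Y m : ℤ) ∣ 5 := by
        have h5eq : (5 : ℤ) = 4 * e' * Y ^ 2 - 5 * m * X₁ ^ 2 := by
          rw [hm] at E2; linear_combination E2
        rw [h5eq]
        exact dvd_sub (Dvd.dvd.mul_left (dvd_pow d1 two_ne_zero) (4 * e'))
          (by exact Dvd.dvd.mul_right (d2.mul_left 5) (X₁ ^ 2))
      have hd5' : Int.gcd Y m ∣ 5 := by exact_mod_cast hd5
      rcases (Nat.prime_five.eq_one_or_self_of_dvd _ hd5') with h | h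
      · exact h
      · exfalso; apply h5m
        have := d2; rw [h] at this; exact_mod_cast this
    · exact ⟨-(m * X₁), 4 * e' * Y₁ ^ 2, by linear_combination -E2'⟩
    · exact ⟨5 * x₁ ^ 2, by rw [hm] at E1; linear_combination -E1⟩
    · exact ⟨5 * X₁ ^ 2, by rw [hm] at E2; linear_combination -E2⟩
    · exact ⟨4 * e' * Y₁ ^ 2, by linear_combination E2'⟩
  · -- case 5 ∤ n, so 5 ∣ e'
    have h5e' : (5 : ℤ) ∣ e' := (h5.dvd_mul.mp hdvd).resolve_left h5n
    obtain ⟨f, hf⟩ := h5e'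
    refine key_jacobi n e' y Y x₁ hn hn4 ?_ ?_ ?_ ?_ ?_ (Or.inl ?_)
    · exact ⟨-(e' * y), x₁ ^ 2, by linear_combination E1⟩
    · -- IsCoprime Y n
      rw [Int.isCoprime_iff_gcd_eq_one]
      have d1 : (Int.gcd Y n : ℤ) ∣ Y := Int.gcd_dvd_left Y n
      have d2 : (Int.gcd Y n : ℤ) ∣ n := Int.gcd_dvd_right Y n
      have hd5 : (Int.gcd Y n : ℤ) ∣ 5 := by
        have h5eq : (5 : ℤ) = 4 * e' * Y ^ 2 - n * X₁ ^ 2 := by linear_combination E2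
        rw [h5eq]
        exact dvd_sub (Dvd.dvd.mul_left (dvd_pow d1 two_ne_zero) (4 * e'))
          (d2.mul_right (X₁ ^ 2))
      have hd5' : Int.gcd Y n ∣ 5 := by exact_mod_cast hd5
      rcases (Nat.prime_five.eq_one_or_self_of_dvd _ hd5') with h | h
      · exact h
      · exfalso; apply h5n
        have := d2; rw [h] at this; exact_mod_cast this
    · exact ⟨n * x₁, -(f * y ^ 2), by rw [hf] at E1; linear_combination E1⟩
    · exact ⟨x₁ ^ 2, by linear_combination -E1⟩
    · exact ⟨X₁ ^ 2, by linear_combination -E2⟩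
    · exact ⟨f * y ^ 2, by rw [hf] at E1; linear_combination E1⟩
end

section
/- Let N be a positive integer and write N = 5^β · n'' with β ≥ 0 and n'' not divisible by 5. Then there exists an integer x with x² ≡ −N (mod 5N) if and only if β is even and n'' ≡ 1 (mod 5) or n'' ≡ −1 (mod 5). -/
private lemma aux_val : ∀ (β : ℕ) (m x : ℤ), ¬ ((5:ℤ) ∣ m) →
    (5:ℤ) ^ (β + 1) ∣ x ^ 2 + 5 ^ β * m →
    Even β ∧ ((m : ZMod 5) = 1 ∨ (m : ZMod 5) = -1)
  | 0, m, x, h5, hd => by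
    refine ⟨Even.zero, ?_⟩
    have h0 : ((x ^ 2 + 5 ^ 0 * m : ℤ) : ZMod 5) = 0 := by
      rw [ZMod.intCast_zmod_eq_zero_iff_dvd]
      exact_mod_cast hd
    push_cast at h0
    have hm : (m : ZMod 5) ≠ 0 := by
      rw [Ne, ZMod.intCast_zmod_eq_zero_iff_dvd]
      exact_mod_cast h5
    have key : ∀ a b : ZMod 5, a ^ 2 + b = 0 → b ≠ 0 → b = 1 ∨ b = -1 := by decide
    exact key (x : ZMod 5) (m : ZMod 5) (by linear_combination h0) hm
  | 1, m, x, h5, hd => by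
    exfalso
    have hx2 : (5:ℤ) ∣ x ^ 2 := by
      have h1 : (5:ℤ) ∣ x ^ 2 + 5 ^ 1 * m := dvd_trans (by norm_num) hd
      have h2 : (5:ℤ) ∣ 5 ^ 1 * m := by norm_num
      simpa using (Int.dvd_sub h1 h2)
    have hx : (5:ℤ) ∣ x := (Int.Prime.dvd_pow' (by norm_num) hx2)
    obtain ⟨y, hy⟩ := hx
    obtain ⟨c, hc⟩ := hd
    subst hy
    have hc' : 25 * y ^ 2 + 5 * m = 25 * c := by linear_combination hc
    exact h5 ⟨c - y ^ 2, by linarith⟩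
  | (β + 2), m, x, h5, hd => by
    have hx2 : (5:ℤ) ∣ x ^ 2 := by
      have h1 : (5:ℤ) ∣ x ^ 2 + 5 ^ (β + 2) * m :=
        dvd_trans (dvd_pow_self 5 (by omega)) hd
      have h2 : (5:ℤ) ∣ 5 ^ (β + 2) * m := dvd_mul_of_dvd_left (dvd_pow_self 5 (by omega)) m
      simpa using (Int.dvd_sub h1 h2)
    have hx : (5:ℤ) ∣ x := (Int.Prime.dvd_pow' (by norm_num) hx2)
    obtain ⟨y, hy⟩ := hx
    subst hy
    have hd' : (5:ℤ) ^ (β + 1) ∣ y ^ 2 + 5 ^ β * m := by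
      have h25 : (25:ℤ) * ((5:ℤ) ^ (β + 1)) ∣ 25 * (y ^ 2 + 5 ^ β * m) := by
        have : (25:ℤ) * ((5:ℤ) ^ (β + 1)) = 5 ^ (β + 2 + 1) := by ring
        rw [this]
        have : (25:ℤ) * (y ^ 2 + 5 ^ β * m) = (5 * y) ^ 2 + 5 ^ (β + 2) * m := by ring
        rw [this]; exact hd
      exact (mul_dvd_mul_iff_left (by norm_num : (25:ℤ) ≠ 0)).mp h25
    obtain ⟨hev, hres⟩ := aux_val β m y h5 hd'
    obtain ⟨k, hk⟩ := hev
    exact ⟨⟨k + 1, by omega⟩, hres⟩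

/-- Write `N = 5^β · n''` with `5 ∤ n''`. Then `x² ≡ −N (mod 5N)` is solvable iff `β` is
even and `n'' ≡ ±1 (mod 5)`. -/
theorem square_neg_N_mod_5N_iff
    (N : ℤ) (hN : 0 < N) (β : ℕ) (n'' : ℤ) (h5 : ¬ ((5 : ℤ) ∣ n''))
    (hfac : N = 5 ^ β * n'') :
    (∃ x : ℤ, x ^ 2 ≡ -N [ZMOD 5 * N]) ↔
      (Even β ∧ (n'' ≡ 1 [ZMOD 5] ∨ n'' ≡ -1 [ZMOD 5])) := by
  constructor
  · rintro ⟨x, hx⟩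
    obtain ⟨c, hc⟩ := (Int.modEq_iff_dvd.mp hx)
    have key : (5:ℤ) ^ (β + 1) ∣ x ^ 2 + 5 ^ β * n'' := by
      refine ⟨n'' * -c, ?_⟩
      rw [hfac] at hc
      linear_combination -hc
    obtain ⟨hev, hres⟩ := aux_val β n'' x h5 key
    refine ⟨hev, ?_⟩
    rcases hres with h | h
    · left
      have := (ZMod.intCast_eq_intCast_iff n'' 1 5).mp (by push_cast; exact h)
      exact_mod_cast this
    · right
      have := (ZMod.intCast_eq_intCast_iff n'' (-1) 5).mp (by push_cast; exact h)
      exact_mod_cast this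
  · rintro ⟨⟨k, hk⟩, hres⟩
    subst hk
    subst hfac
    rcases hres with h | h
    · obtain ⟨c, hc⟩ := Int.modEq_iff_dvd.mp h
      have hn : n'' = 1 - 5 * c := by linarith
      refine ⟨2 * 5 ^ k * n'' ^ 2, Int.modEq_iff_dvd.mpr ⟨-1 + 12 * c - 60 * c ^ 2 + 100 * c ^ 3, ?_⟩⟩
      subst hn
      ring
    · obtain ⟨c, hc⟩ := Int.modEq_iff_dvd.mp h
      have hn : n'' = -1 - 5 * c := by linarith
      refine ⟨5 ^ k * n'' ^ 2, Int.modEq_iff_dvd.mpr ⟨3 * c + 15 * c ^ 2 + 25 * c ^ 3, ?_⟩⟩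
      subst hn
      ring
end

section
/- Let n and e' be positive integers with n ≡ 3 (mod 4). Set δ := gcd(n, e'), n' := n/δ, e'' := e'/δ, and e := n·e'. Let ε ∈ {1, −1} and let a, b be integers with a > 0, a² − n'·e''·b² = 1, 2δ dividing b, n dividing a − ε, and 2e' dividing a − ε. Then ε = 1 and there exist coprime integers r and s with r > 0, r² − e·s² = 1, a = 2e·s² + 1, and b = 2δ·r·s. -/
open scoped NumberTheorySymbols
private lemma no_neg_one_sq_mod (m : ℕ) (hm : m % 4 = 3) (x : ℤ) (hd : (m : ℤ) ∣ x ^ 2 + 1) :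
    False := by
  have hodd : Odd m := Nat.odd_iff.mpr (Nat.odd_of_mod_four_eq_three hm)
  have hcop : x.gcd m = 1 := by
    have h1 : (x.gcd m : ℤ) ∣ x := Int.gcd_dvd_left _ _
    have h2 : (x.gcd m : ℤ) ∣ (m : ℤ) := Int.gcd_dvd_right _ _
    have h3 : (x.gcd m : ℤ) ∣ 1 := by
      have := dvd_sub (h2.trans hd) (h1.mul_left x)
      have hx : x ^ 2 + 1 - x * x = 1 := by ring
      rwa [hx] at this
    exact Int.eq_one_of_dvd_one (by positivity) h3 |> fun h => by exact_mod_cast h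
  have hsq : J(x ^ 2 | m) = 1 := jacobiSym.sq_one' hcop
  have hmodeq : (-1 : ℤ) % m = (x ^ 2 : ℤ) % m := by
    have : (m : ℤ) ∣ x ^ 2 - (-1) := by simpa [sub_neg_eq_add] using hd
    exact Int.modEq_iff_dvd.mpr this
  have hneg : J(-1 | m) = J(x ^ 2 | m) := jacobiSym.mod_left' hmodeq
  have hχ : J(-1 | m) = -1 := by
    rw [jacobiSym.at_neg_one hodd]
    exact_mod_cast ZMod.χ₄_nat_three_mod_four hm
  rw [hneg, hsq] at hχ
  norm_num at hχ

/-- Classification of the rotations of the Picard lattice `diag(2n, −2e')` extending to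
the K3^[2] lattice: with `δ = gcd(n, e')`, `n = δn'`, `e' = δe''`, `e = ne'`, if `a > 0`,
`a² − n'e''·b² = 1`, `2δ ∣ b`, `n ∣ a − ε` and `2e' ∣ a − ε` with `ε = ±1`, then `ε = 1`
and there are coprime `r > 0`, `s` with `r² − e·s² = 1`, `a = 2e·s² + 1`, `b = 2δrs`. -/
theorem rotation_extension_classification
    (n e' : ℤ) (hn : 0 < n) (he' : 0 < e') (hn4 : n % 4 = 3)
    (δ n' e'' e : ℤ) (hδ : δ = Int.gcd n e')
    (hn' : n = δ * n') (he'' : e' = δ * e'') (he : e = n * e')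
    (ε : ℤ) (hε : ε = 1 ∨ ε = -1)
    (a b : ℤ) (ha : 0 < a) (hpell : a ^ 2 - n' * e'' * b ^ 2 = 1)
    (hb : 2 * δ ∣ b) (h1 : n ∣ a - ε) (h2 : 2 * e' ∣ a - ε) :
    ε = 1 ∧ ∃ r s : ℤ, IsCoprime r s ∧ 0 < r ∧ r ^ 2 - e * s ^ 2 = 1 ∧
      a = 2 * e * s ^ 2 + 1 ∧ b = 2 * δ * r * s := by
  obtain ⟨c, hc⟩ := hb
  have hepos : 0 < e := he ▸ mul_pos hn he'
  have hpell2 : a ^ 2 - 4 * e * c ^ 2 = 1 := by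
    rw [he, hn', he'']
    linear_combination hpell + n' * e'' * (b + 2 * δ * c) * hc
  -- a is odd
  obtain ⟨u, hu⟩ : Odd a := by
    rcases Int.even_or_odd a with ⟨k, hk⟩ | h
    · exfalso
      have h4 : 4 * (k ^ 2 - e * c ^ 2) = 1 := by rw [hk] at hpell2; linarith [hpell2]; 
      omega
    · exact h
  have hupos : 0 ≤ u := by omega
  have huv : u * (u + 1) = e * c ^ 2 := by
    have h4 : 4 * (u * (u + 1)) = 4 * (e * c ^ 2) := by
      rw [hu] at hpell2; linear_combination hpell2
    exact mul_left_cancel₀ (by norm_num : (4 : ℤ) ≠ 0) h4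
  have hcop2n : IsCoprime n 2 := by
    obtain ⟨k, hk⟩ : Odd n := Int.odd_iff.mpr (by omega)
    exact ⟨1, -k, by linarith⟩
  have hcopuv : IsCoprime (u + 1) u := ⟨1, -1, by ring⟩
  have hεcase : ε = 1 := by
    rcases hε with h | h
    · exact h
    exfalso
    subst h
    -- n ∣ a + 1 = 2(u+1), e' ∣ u + 1
    have hnv : n ∣ u + 1 := by
      have : n ∣ 2 * (u + 1) := by
        have : a - (-1) = 2 * (u + 1) := by omega
        rwa [this] at h1
      exact hcop2n.dvd_of_dvd_mul_left this
    have hev : e' ∣ u + 1 := by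
      have h2' : 2 * e' ∣ 2 * (u + 1) := by
        have : a - (-1) = 2 * (u + 1) := by omega
        rwa [this] at h2
      exact (mul_dvd_mul_iff_left (by norm_num : (2:ℤ) ≠ 0)).mp h2'
    have hune : u ≠ 0 := by
      intro h0
      subst h0
      have := Int.le_of_dvd (by norm_num) hnv
      omega
    have hcopue : IsCoprime u e := by
      rw [he]
      exact ((hcopuv.symm.of_isCoprime_of_dvd_right hnv).mul_right
        (hcopuv.symm.of_isCoprime_of_dvd_right hev))
    have hudvd : u ∣ c ^ 2 := hcopue.dvd_of_dvd_mul_left ⟨u + 1, by linarith [huv]⟩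
    obtain ⟨w, hw⟩ := hudvd
    have hveq : u + 1 = e * w := by
      apply mul_left_cancel₀ hune
      rw [huv, hw]; ring
    have hcopuw : IsCoprime u w :=
      hcopuv.symm.of_isCoprime_of_dvd_right ⟨e, by linarith [hveq]⟩
    obtain ⟨r0, hr0⟩ := Int.sq_of_isCoprime hcopuw hw.symm
    have hueq : u = r0 ^ 2 := by
      rcases hr0 with h | h
      · exact h
      · nlinarith [sq_nonneg r0]
    have : n ∣ r0 ^ 2 + 1 := hueq ▸ hnv
    have hm4 : n.toNat % 4 = 3 := by omega
    exact no_neg_one_sq_mod n.toNat hm4 r0 (by rwa [Int.toNat_of_nonneg hn.le])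
  subst hεcase
  refine ⟨rfl, ?_⟩
  -- now n ∣ u, e' ∣ u
  have hnu : n ∣ u := by
    have : n ∣ 2 * u := by
      have : a - 1 = 2 * u := by omega
      rwa [this] at h1
    exact hcop2n.dvd_of_dvd_mul_left this
  have heu : e' ∣ u := by
    have h2' : 2 * e' ∣ 2 * u := by
      have : a - 1 = 2 * u := by omega
      rwa [this] at h2
    exact (mul_dvd_mul_iff_left (by norm_num : (2:ℤ) ≠ 0)).mp h2'
  have hcopve : IsCoprime (u + 1) e := by
    rw [he]
    exact ((hcopuv.of_isCoprime_of_dvd_right hnu).mul_right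
      (hcopuv.of_isCoprime_of_dvd_right heu))
  have hvdvd : (u + 1) ∣ c ^ 2 :=
    hcopve.dvd_of_dvd_mul_left ⟨u, by linarith [huv]⟩
  obtain ⟨w, hw⟩ := hvdvd
  have hueq : u = e * w := by
    apply mul_right_cancel₀ (show u + 1 ≠ 0 by omega)
    rw [huv, hw]; ring
  have hwpos : 0 ≤ w := by nlinarith
  have hcopvw : IsCoprime (u + 1) w :=
    hcopuv.of_isCoprime_of_dvd_right ⟨e, by linarith [hueq]⟩
  obtain ⟨r0, hr0⟩ := Int.sq_of_isCoprime hcopvw hw.symm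
  have hveq : u + 1 = r0 ^ 2 := by
    rcases hr0 with h | h
    · exact h
    · nlinarith [sq_nonneg r0]
  obtain ⟨s0, hs0⟩ := Int.sq_of_isCoprime hcopvw.symm (by rw [mul_comm]; exact hw.symm)
  have hweq : w = s0 ^ 2 := by
    rcases hs0 with h | h
    · exact h
    · have hs00 : s0 = 0 := by nlinarith [sq_nonneg s0]
      rw [h, hs00]; ring
  set r : ℤ := |r0| with hr
  have hrsq : r ^ 2 = r0 ^ 2 := sq_abs r0
  have hrpos : 0 < r := by
    rcases abs_pos.mpr (show r0 ≠ 0 by intro h0; rw [h0] at hveq; nlinarith) with h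
    exact h
  have hcsq : c ^ 2 = (r * s0) ^ 2 := by
    rw [hw, hveq, hweq, ← hrsq]; ring
  have hcases : c = r * s0 ∨ c = r * (-s0) := by
    have : (c - r * s0) * (c + r * s0) = 0 := by linear_combination hcsq
    rcases mul_eq_zero.mp this with h | h
    · left; linarith
    · right; linarith
  have hcoprs : ∀ s : ℤ, s ^ 2 = s0 ^ 2 → IsCoprime r s := by
    intro s hs
    have h1 : IsCoprime (r ^ 2) (s ^ 2) := by
      rw [hrsq, hs, ← hveq, ← hweq]; exact hcopvw
    exact (h1.of_isCoprime_of_dvd_left (dvd_pow_self r two_ne_zero)).of_isCoprime_of_dvd_right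
      (dvd_pow_self s two_ne_zero)
  rcases hcases with hcr | hcr
  · refine ⟨r, s0, hcoprs s0 rfl, hrpos, ?_, ?_, ?_⟩
    · rw [hrsq, ← hveq, ← hweq, hueq]; ring
    · rw [hu, hueq, hweq]; ring
    · rw [hc, hcr]; ring
  · refine ⟨r, -s0, hcoprs (-s0) (by ring), hrpos, ?_, ?_, ?_⟩
    · have : (-s0) ^ 2 = s0 ^ 2 := by ring
      rw [this, hrsq, ← hveq, ← hweq, hueq]; ring
    · have : (-s0) ^ 2 = s0 ^ 2 := by ring
      rw [this, hu, hueq, hweq]; ring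
    · rw [hc, hcr]; ring
end

section
/- Let n and e' be positive integers with n ≡ 3 (mod 4) and gcd(n, e') = 1, and set e := n·e'. Let ε ∈ {1, −1} and let a, b be integers with a > 0, a² − e·b² = 1, b even, n dividing a − ε, and 2e' dividing a + ε. Then there exist coprime integers r and s with r ≥ 0, b = 2·r·s, a = 2e'·s² − ε, and n·r² − e'·s² = −ε. In particular, one of the two equations x² − e·y² = n and x² − e·y² = −n is solvable in integers. -/
private lemma sq_of_coprime_nonneg {A B c : ℤ} (h : IsCoprime A B) (heq : A * B = c ^ 2)
    (hA : 0 ≤ A) : ∃ r : ℤ, 0 ≤ r ∧ A = r ^ 2 := by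
  obtain ⟨a0, h0 | h0⟩ := Int.sq_of_isCoprime h heq
  · exact ⟨|a0|, abs_nonneg _, by rw [sq_abs]; exact h0⟩
  · have ha0 : a0 = 0 := by nlinarith [sq_nonneg a0]
    exact ⟨0, le_refl _, by simp [h0, ha0]⟩

/-- Classification of the reflections of the Picard lattice `diag(2n, −2e')` extending to
the K3^[2] lattice when `gcd(n, e') = 1`: if `a > 0`, `a² − e·b² = 1` with `b` even,
`n ∣ a − ε` and `2e' ∣ a + ε` with `ε = ±1`, then there are coprime `r ≥ 0`, `s` with
`b = 2rs`, `a = 2e'·s² − ε`, `n·r² − e'·s² = −ε`; in particular one of the equations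
`x² − e·y² = ±n` is solvable. -/
theorem reflection_extension_classification
    (n e' : ℤ) (hn : 0 < n) (he' : 0 < e') (hn4 : n % 4 = 3)
    (hcop : IsCoprime n e') (e : ℤ) (he : e = n * e')
    (ε : ℤ) (hε : ε = 1 ∨ ε = -1)
    (a b : ℤ) (ha : 0 < a) (hpell : a ^ 2 - e * b ^ 2 = 1) (hb : Even b)
    (h1 : n ∣ a - ε) (h2 : 2 * e' ∣ a + ε) :
    (∃ r s : ℤ, IsCoprime r s ∧ 0 ≤ r ∧ b = 2 * r * s ∧
        a = 2 * e' * s ^ 2 - ε ∧ n * r ^ 2 - e' * s ^ 2 = -ε) ∧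
    ((∃ x y : ℤ, x ^ 2 - e * y ^ 2 = n) ∨ (∃ x y : ℤ, x ^ 2 - e * y ^ 2 = -n)) := by
  obtain ⟨u, hu⟩ := h1
  obtain ⟨v, hv⟩ := h2
  obtain ⟨c, hc⟩ := hb
  have hbc : b = 2 * c := by omega
  rw [he] at hpell
  have hε2 : ε ^ 2 = 1 := by rcases hε with h | h <;> subst h <;> norm_num
  -- a is odd
  have hna : Odd a := by
    rcases Int.even_or_odd a with ⟨k, hk⟩ | h
    · exfalso
      have h4 : (1 : ℤ) = 4 * (k ^ 2 - n * e' * c ^ 2) := by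
        rw [hk, hbc] at hpell; linear_combination -hpell
      omega
    · exact h
  -- u is even
  have hnu : Even u := by
    have hea : Even (n * u) := by
      rw [← hu]
      rcases hε with h | h <;> subst h
      · exact Odd.sub_odd hna odd_one
      · exact Odd.sub_odd hna ⟨-1, by ring⟩
    rcases Int.even_mul.mp hea with h | h
    · exfalso; rcases h with ⟨m, hm⟩; omega
    · exact h
  obtain ⟨A', hA'⟩ := hnu
  have hA : a - ε = 2 * n * A' := by rw [hu, hA']; ring
  have hB : a + ε = 2 * e' * v := hv
  -- key product identity
  have hne : (4 * n * e' : ℤ) ≠ 0 := by positivity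
  have key : A' * v = c ^ 2 := by
    apply mul_left_cancel₀ hne
    rw [hbc] at hpell
    linear_combination (-(a + ε)) * hA - 2 * n * A' * hB + hpell - hε2
  -- e' * v = n * A' + ε
  have hlink : e' * v = n * A' + ε := by linarith
  -- nonnegativity
  have haε : 0 ≤ a - ε := by rcases hε with h | h <;> subst h <;> omega
  have hAnn : 0 ≤ A' := by nlinarith
  have hvnn : 0 ≤ v := by nlinarith
  -- coprimality of A' and v
  have hcAB : IsCoprime (n * A') (e' * v) := by
    have h1 : IsCoprime (n * A') ε := by
      rcases hε with h | h <;> subst h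
      · exact isCoprime_one_right
      · exact isCoprime_one_right.neg_right
    have := h1.add_mul_left_right 1
    rwa [mul_one, show ε + n * A' = n * A' + ε by ring, ← hlink] at this
  have hcA'v : IsCoprime A' v :=
    (hcAB.of_isCoprime_of_dvd_left (dvd_mul_left A' n)).of_isCoprime_of_dvd_right
      (dvd_mul_left v e')
  -- both are squares
  obtain ⟨r, hrnn, hr⟩ := sq_of_coprime_nonneg hcA'v key hAnn
  obtain ⟨s₀, _, hs₀⟩ := sq_of_coprime_nonneg hcA'v.symm (by rw [mul_comm]; exact key) hvnn
  have hcrs : IsCoprime r s₀ := by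
    rw [hr, hs₀] at hcA'v
    exact (hcA'v.of_isCoprime_of_dvd_left (dvd_pow_self r two_ne_zero)).of_isCoprime_of_dvd_right
      (dvd_pow_self s₀ two_ne_zero)
  -- c = ± r * s₀
  have hcsq : (c - r * s₀) * (c + r * s₀) = 0 := by
    rw [hr, hs₀] at key
    linear_combination -key
  have main : ∃ r' s : ℤ, IsCoprime r' s ∧ 0 ≤ r' ∧ b = 2 * r' * s ∧
      a = 2 * e' * s ^ 2 - ε ∧ n * r' ^ 2 - e' * s ^ 2 = -ε := by
    rcases mul_eq_zero.mp hcsq with h | h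
    · refine ⟨r, s₀, hcrs, hrnn, by linear_combination hbc + 2 * h, ?_, ?_⟩
      · rw [← hs₀]; linarith
      · rw [← hs₀, ← hr]; linarith
    · refine ⟨r, -s₀, hcrs.neg_right, hrnn, by linear_combination hbc + 2 * h, ?_, ?_⟩
      · rw [neg_pow, show ((-1:ℤ))^2 = 1 by norm_num, one_mul, ← hs₀]; linarith
      · rw [neg_pow, show ((-1:ℤ))^2 = 1 by norm_num, one_mul, ← hs₀, ← hr]; linarith
  refine ⟨main, ?_⟩
  obtain ⟨r', s, _, _, _, _, heq⟩ := main
  rcases hε with h | h <;> subst h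
  · right
    exact ⟨n * r', s, by rw [he]; linear_combination n * heq⟩
  · left
    exact ⟨n * r', s, by rw [he]; linear_combination n * heq⟩
end

section
/- Let n and e' be positive integers, set δ := gcd(n, e'), n' := n/δ, and e'' := e'/δ. A 2×2 integer matrix M satisfies Mᵀ·G·M = G, where G is the diagonal matrix with entries 2n and −2e', if and only if there exist integers a, b and α ∈ {1, −1} with a² − n'·e''·b² = 1 such that M has first row (a, α·e''·b) and second row (n'·b, α·a); here α is the determinant of M. -/
open Matrix

/-- Description of the orthogonal group of the rank-2 lattice with Gram matrix
`diag(2n, −2e')`: with `δ = gcd(n, e')`, `n = δn'`, `e' = δe''`, an integer matrix `M`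
satisfies `Mᵀ G M = G` iff `M = !![a, α·e''·b; n'·b, α·a]` for some integers `a`, `b` and
`α = ±1` with `a² − n'e''·b² = 1`; moreover `α = det M`. -/
theorem orthogonal_group_rank_two_lattice
    (n e' : ℤ) (hn : 0 < n) (he' : 0 < e')
    (δ n' e'' : ℤ) (hδ : δ = Int.gcd n e') (hn' : n = δ * n') (he'' : e' = δ * e'')
    (M : Matrix (Fin 2) (Fin 2) ℤ) :
    (Mᵀ * !![2 * n, 0; 0, -2 * e'] * M = !![2 * n, 0; 0, -2 * e']) ↔
      ∃ a b α : ℤ, (α = 1 ∨ α = -1) ∧ a ^ 2 - n' * e'' * b ^ 2 = 1 ∧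
        M = !![a, α * e'' * b; n' * b, α * a] ∧ M.det = α := by
  subst hn' he''
  have hδ0 : 0 < δ := by
    rw [hδ]
    exact_mod_cast Int.gcd_pos_of_ne_zero_left _ hn.ne'
  have hn'0 : 0 < n' := by
    rcases mul_pos_iff.mp hn with ⟨_, h⟩ | ⟨h, _⟩
    · exact h
    · linarith
  have he''0 : 0 < e'' := by
    rcases mul_pos_iff.mp he' with ⟨_, h⟩ | ⟨h, _⟩
    · exact h
    · linarith
  have hne : n' ≠ 0 := hn'0.ne'
  have hene : e'' ≠ 0 := he''0.ne'
  have h2δ : (2 * δ : ℤ) ≠ 0 := by positivity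
  have hcop : IsCoprime n' e'' := by
    rw [Int.isCoprime_iff_gcd_eq_one]
    rw [Int.gcd_mul_left] at hδ
    have hδa : (δ.natAbs : ℤ) = δ := Int.natAbs_of_nonneg hδ0.le
    push_cast at hδ
    rw [abs_of_pos hδ0] at hδ
    have h2 := mul_left_cancel₀ hδ0.ne' ((mul_one δ).trans hδ)
    exact_mod_cast h2.symm
  constructor
  · intro h
    have e00 := congrFun (congrFun h 0) 0
    have e01 := congrFun (congrFun h 0) 1
    have e11 := congrFun (congrFun h 1) 1
    simp [Matrix.mul_apply, Fin.sum_univ_two, Matrix.transpose_apply] at e00 e01 e11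
    set p := M 0 0 with hp
    set q := M 0 1 with hq0
    set r := M 1 0 with hr0
    set s := M 1 1 with hs0
    have h1 : n' * p ^ 2 - e'' * r ^ 2 = n' :=
      mul_left_cancel₀ h2δ (by linear_combination e00)
    have h2 : n' * (p * q) - e'' * (r * s) = 0 :=
      mul_left_cancel₀ h2δ (by linear_combination e01)
    have h3 : n' * q ^ 2 - e'' * s ^ 2 = -e'' :=
      mul_left_cancel₀ h2δ (by linear_combination e11)
    set α := p * s - q * r with hα
    have hα2 : α ^ 2 = 1 := by
      have hne2 : n' * e'' ≠ 0 := mul_ne_zero hne hene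
      refine mul_left_cancel₀ hne2 ?_
      linear_combination (n' * (p * q) - e'' * (r * s)) * h2 + e'' * h1
        - (n' * p ^ 2 - e'' * r ^ 2) * h3
    have hαpm : α = 1 ∨ α = -1 := by
      have : (α - 1) * (α + 1) = 0 := by linear_combination hα2
      rcases mul_eq_zero.mp this with h' | h'
      · left; linarith
      · right; linarith
    have hs : s = α * p := by
      refine mul_left_cancel₀ hne ?_
      linear_combination -s * h1 + r * h2
    have hr : n' * (α * q) = e'' * r := by
      linear_combination s * h2 - r * h3
    have hdvd : n' ∣ r := hcop.dvd_of_dvd_mul_left ⟨α * q, by linarith [hr]⟩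
    obtain ⟨b, hb⟩ := hdvd
    have hq : q = α * e'' * b := by
      have haq : α * q = e'' * b := by
        refine mul_left_cancel₀ hne ?_
        rw [hr, hb]; ring
      linear_combination α * haq - q * hα2
    refine ⟨p, b, α, hαpm, ?_, ?_, ?_⟩
    · refine mul_left_cancel₀ hne ?_
      linear_combination h1 + e'' * (r + n' * b) * hb
    · rw [Matrix.eta_fin_two M, ← hp, ← hq0, ← hr0, ← hs0, hq, hb, hs]
    · rw [Matrix.det_fin_two, ← hp, ← hq0, ← hr0, ← hs0, hα]
  · rintro ⟨a, b, α, hαpm, hab, hM, -⟩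
    subst hM
    have hα2 : α ^ 2 = 1 := by rcases hαpm with h | h <;> subst h <;> norm_num
    have hT : (!![a, α * e'' * b; n' * b, α * a])ᵀ = !![a, n' * b; α * e'' * b, α * a] := by
      ext i j; fin_cases i <;> fin_cases j <;> rfl
    rw [hT]
    ext i j
    fin_cases i <;> fin_cases j
    · simp [Matrix.mul_apply, Fin.sum_univ_two]
      linear_combination 2 * δ * n' * hab
    · simp [Matrix.mul_apply, Fin.sum_univ_two]
      ring
    · simp [Matrix.mul_apply, Fin.sum_univ_two]
      ring
    · simp [Matrix.mul_apply, Fin.sum_univ_two]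
      linear_combination (-2 * δ * e'' * α ^ 2) * hab - 2 * δ * e'' * hα2
end

section
/- Let n and m be positive integers with (n, m) ≠ (1, 2) and set e := m² + n. Then every pair of positive integers (a, b) with a² − 4e·b² = 5 satisfies m·a < 2e·b. -/
/-- For `e = m² + n` with `n, m > 0` and `(n, m) ≠ (1, 2)`, every positive solution
`(a, b)` of `a² − 4e·b² = 5` satisfies `m·a < 2e·b`. -/
theorem slope_bound_pell_five
    (n m : ℤ) (hn : 0 < n) (hm : 0 < m) (hne : ¬ (n = 1 ∧ m = 2))
    (e : ℤ) (he : e = m ^ 2 + n)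
    (a b : ℤ) (ha : 0 < a) (hb : 0 < b) (hp : a ^ 2 - 4 * e * b ^ 2 = 5) :
    m * a < 2 * e * b := by
  have he0 : 0 < e := by nlinarith [sq_nonneg m]
  have key : 5 * m ^ 2 < 4 * e * n * b ^ 2 := by
    rcases lt_or_ge 1 b with hb2 | hb1
    · -- b ≥ 2
      have hb4 : (4 : ℤ) ≤ b ^ 2 := by nlinarith
      have h1 : 0 ≤ (b ^ 2 - 4) * (e * n) :=
        mul_nonneg (by linarith) (by positivity)
      have h2 : 0 ≤ (n - 1) * m ^ 2 :=
        mul_nonneg (by linarith) (sq_nonneg m)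
      nlinarith [sq_nonneg n]
    · have hb1 : b = 1 := le_antisymm hb1 hb
      subst hb1
      rcases lt_or_ge 1 n with hn2 | hn1
      · nlinarith [sq_nonneg m]
      · have hn1 : n = 1 := le_antisymm hn1 hn
        subst hn1
        exfalso
        have hkey : a * a = 4 * (m * m) + 9 := by nlinarith
        have h9 : (a - 2 * m) * (a + 2 * m) = 9 := by nlinarith
        have hd : a + 2 * m ∣ 9 := Dvd.intro_left _ h9
        have hle : a + 2 * m ≤ 9 := Int.le_of_dvd (by norm_num) hd
        have hm4 : m ≤ 4 := by linarith
        have ha9 : a ≤ 7 := by linarith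
        interval_cases m <;> interval_cases a <;> simp_all
  have h2 : (m * a) ^ 2 < (2 * e * b) ^ 2 := by nlinarith
  have hma : 0 ≤ m * a := by positivity
  have heb : 0 < 2 * e * b := by positivity
  nlinarith
end

section
/- Let n be a positive integer with n ≡ 3 (mod 4), let m be a nonnegative integer with (n, m) ≠ (3, 1), and set e := m² + m + (n+1)/4. Then every pair of positive integers (a, b) with a² − e·b² = 1 satisfies (2m+1)·a < 2e·b. -/
/-- For `n ≡ 3 (mod 4)` positive, `m ≥ 0` with `(n, m) ≠ (3, 1)`, and
`e = m² + m + (n+1)/4`, every positive solution `(a, b)` of `a² − e·b² = 1` satisfies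
`(2m+1)·a < 2e·b`. -/
theorem slope_bound_pell_one_divisibility_two
    (n m : ℤ) (hn : 0 < n) (hn4 : n % 4 = 3) (hm : 0 ≤ m) (hne : ¬ (n = 3 ∧ m = 1))
    (e : ℤ) (he : e = m ^ 2 + m + (n + 1) / 4)
    (a b : ℤ) (ha : 0 < a) (hb : 0 < b) (hp : a ^ 2 - e * b ^ 2 = 1) :
    (2 * m + 1) * a < 2 * e * b := by
  have hk1 : 1 ≤ (n + 1) / 4 := by omega
  set k := (n + 1) / 4 with hkdef
  have he1 : 1 ≤ e := by nlinarith
  have key : ((2 * m + 1) * a) ^ 2 < (2 * e * b) ^ 2 := by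
    rcases (by omega : b = 1 ∨ 2 ≤ b) with rfl | hb2
    · have ha2 : a ^ 2 = e + 1 := by nlinarith
      rcases (by omega : 2 ≤ k ∨ k = 1) with hk2 | hk1'
      · nlinarith
      · have hn3 : n = 3 := by omega
        have hm1 : m ≠ 1 := fun h => hne ⟨hn3, h⟩
        rcases (by omega : m = 0 ∨ 2 ≤ m) with rfl | hm2
        · -- a² = 2, impossible
          exfalso
          have he' : e = 1 := by omega
          rcases (by omega : a = 1 ∨ 2 ≤ a) with rfl | ha2'
          · simp [he'] at ha2
          · nlinarith
        · -- a² = m²+m+2 with m ≥ 2, impossible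
          exfalso
          have hea : a ^ 2 = m ^ 2 + m + 2 := by omega
          have hma : m < a := by nlinarith
          have hma' : m + 1 ≤ a := by omega
          nlinarith
    · have hbb : 4 ≤ b ^ 2 := by nlinarith
      nlinarith [mul_le_mul_of_nonneg_left hbb (show (0:ℤ) ≤ (4 * k - 1) * e by nlinarith)]
  have hpos : (0:ℤ) ≤ 2 * e * b := by nlinarith
  exact lt_of_pow_lt_pow_left₀ 2 hpos key
end

section
/- Let n be a positive integer with n ≡ 3 (mod 4), let m be a nonnegative integer, and set e := m² + m + (n+1)/4. Then every pair of positive integers (a, b) with a² − 4e·b² = 5 satisfies (2m+1)·a < 4e·b. -/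
/-- For `n ≡ 3 (mod 4)` positive, `m ≥ 0`, and `e = m² + m + (n+1)/4`, every positive
solution `(a, b)` of `a² − 4e·b² = 5` satisfies `(2m+1)·a < 4e·b`. -/
theorem slope_bound_pell_five_divisibility_two
    (n m : ℤ) (hn : 0 < n) (hn4 : n % 4 = 3) (hm : 0 ≤ m)
    (e : ℤ) (he : e = m ^ 2 + m + (n + 1) / 4)
    (a b : ℤ) (ha : 0 < a) (hb : 0 < b) (hp : a ^ 2 - 4 * e * b ^ 2 = 5) :
    (2 * m + 1) * a < 4 * e * b := by
  have hk1 : 1 ≤ (n + 1) / 4 := by omega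
  set k := (n + 1) / 4 with hk
  have he4 : 4 * e = (2 * m + 1) ^ 2 + 4 * k - 1 := by rw [he]; ring
  have hepos : 0 < e := by nlinarith [sq_nonneg m]
  rcases (by omega : b = 1 ∨ 2 ≤ b) with hb1 | hb2
  · -- case b = 1 : first show a is odd and a ≥ 2m+3
    subst hb1
    rcases Int.even_or_odd a with ⟨c, hc⟩ | ⟨c, hc⟩
    · exfalso
      subst hc
      have h4 : (4 : ℤ) * (c ^ 2 - e) = 5 := by linear_combination hp
      have : (4 : ℤ) ∣ 5 := ⟨_, h4.symm⟩
      norm_num at this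
    · subst hc
      have hc0 : 0 ≤ c := by omega
      have hcm : m + 1 ≤ c := by nlinarith
      nlinarith
  · -- case b ≥ 2
    have hb4 : 4 ≤ b ^ 2 := by nlinarith
    have h1 : (3 : ℤ) ≤ 4 * k - 1 := by omega
    have h3 : (2 * m + 1) ^ 2 + 3 ≤ 4 * e := by omega
    have h4e : 0 < 4 * e := by linarith
    have key : 5 * (2 * m + 1) ^ 2 < (4 * k - 1) * (4 * e) * b ^ 2 := by
      have h5 : 3 * (4 * e) * 4 ≤ (4 * k - 1) * (4 * e) * 4 := by nlinarith
      have h6 : (4 * k - 1) * (4 * e) * 4 ≤ (4 * k - 1) * (4 * e) * b ^ 2 := by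
        have : 0 ≤ (4 * k - 1) * (4 * e) := by positivity
        nlinarith
      nlinarith
    have hsq : ((2 * m + 1) * a) ^ 2 < (4 * e * b) ^ 2 := by nlinarith
    have hpos2 : 0 < 4 * e * b := by positivity
    exact lt_of_pow_lt_pow_left₀ 2 hpos2.le hsq
end

section
/- Let n be a positive integer, let a, b, c, m be integers not all zero, and set s := gcd(2n·a, 2b, c) (a positive integer). Let e be an integer with e·s² = 4n·(n·a² + b² + m·c²). Then s divides 2n·a and 2b, and: if s divides b, then e ≡ (2n·a/s)² (mod 4n); if s does not divide b, then e ≡ (2n·a/s)² + n (mod 4n). In particular, e or e − n is a square modulo 4n. -/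
/-- Congruence for the discriminant of a Heegner divisor (divisibility 1): with
`s = gcd(2na, 2b, c)` positive and `e·s² = 4n(na² + b² + mc²)`, one has `s ∣ 2na`,
`s ∣ 2b`, and `e ≡ (2na/s)² (mod 4n)` if `s ∣ b`, while `e ≡ (2na/s)² + n (mod 4n)`
otherwise; in particular `e` or `e − n` is a square modulo `4n`. -/
theorem heegner_discriminant_congruence
    (n : ℤ) (hn : 0 < n) (a b c m : ℤ)
    (hnz : ¬ (a = 0 ∧ b = 0 ∧ c = 0 ∧ m = 0))
    (s : ℤ) (hs : s = (Int.gcd (2 * n * a) (Int.gcd (2 * b) c : ℤ) : ℤ))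
    (hspos : 0 < s)
    (e : ℤ) (he : e * s ^ 2 = 4 * n * (n * a ^ 2 + b ^ 2 + m * c ^ 2)) :
    s ∣ 2 * n * a ∧ s ∣ 2 * b ∧
      (s ∣ b → e ≡ (2 * n * a / s) ^ 2 [ZMOD 4 * n]) ∧
      (¬ s ∣ b → e ≡ (2 * n * a / s) ^ 2 + n [ZMOD 4 * n]) ∧
      ∃ x : ℤ, x ^ 2 ≡ e [ZMOD 4 * n] ∨ x ^ 2 ≡ e - n [ZMOD 4 * n] := by
  have hsne : s ≠ 0 := hspos.ne'
  have h1 : s ∣ 2 * n * a := hs ▸ Int.gcd_dvd_left (2 * n * a) (Int.gcd (2 * b) c : ℤ)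
  have h2 : s ∣ 2 * b := hs ▸ dvd_trans (Int.gcd_dvd_right (2 * n * a) (Int.gcd (2 * b) c : ℤ)) (Int.gcd_dvd_left (2 * b) c)
  have h3 : s ∣ c := hs ▸ dvd_trans (Int.gcd_dvd_right (2 * n * a) (Int.gcd (2 * b) c : ℤ)) (Int.gcd_dvd_right (2 * b) c)
  obtain ⟨A, hA⟩ := h1
  obtain ⟨B, hB⟩ := h2
  obtain ⟨C, hC⟩ := h3
  have hdiv : 2 * n * a / s = A := by
    rw [hA, Int.mul_ediv_cancel_left _ hsne]
  have key : e = A ^ 2 + n * B ^ 2 + 4 * n * m * C ^ 2 := by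
    apply mul_right_cancel₀ (pow_ne_zero 2 hsne)
    linear_combination he + (2 * n * a + s * A) * hA + n * (2 * b + s * B) * hB
      + 4 * n * m * (c + s * C) * hC
  have hcase1 : s ∣ b → e ≡ A ^ 2 [ZMOD 4 * n] := by
    intro ⟨b', hb'⟩
    have hBe : B = 2 * b' := by
      apply mul_left_cancel₀ hsne
      linear_combination -hB + 2 * hb'
    exact (Int.modEq_iff_dvd.mpr ⟨-(b' ^ 2 + m * C ^ 2), by
      linear_combination -key - n * (B + 2 * b') * hBe⟩)
  have hcase2 : ¬ s ∣ b → e ≡ A ^ 2 + n [ZMOD 4 * n] := by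
    intro hsb
    have hBodd : Odd B := by
      rcases Int.even_or_odd B with ⟨k, hk⟩ | hO
      · exfalso
        apply hsb
        exact ⟨k, by
          apply mul_left_cancel₀ (two_ne_zero (α := ℤ))
          linear_combination hB + s * hk⟩
      · exact hO
    obtain ⟨k, hk⟩ := hBodd
    exact (Int.modEq_iff_dvd.mpr ⟨-(k ^ 2 + k + m * C ^ 2), by
      linear_combination -key - n * (B + 2 * k + 1) * hk⟩)
  refine ⟨⟨A, hA⟩, ⟨B, hB⟩, ?_, ?_, ?_⟩
  · intro hsb; rw [hdiv]; exact hcase1 hsb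
  · intro hsb; rw [hdiv]; exact hcase2 hsb
  · by_cases hsb : s ∣ b
    · exact ⟨A, Or.inl (hcase1 hsb).symm⟩
    · refine ⟨A, Or.inr ?_⟩
      have := (hcase2 hsb).symm
      have h' : A ^ 2 + n - n ≡ e - n [ZMOD 4 * n] := Int.ModEq.sub this rfl
      simpa using h'
end

section
/- Let n be a positive squarefree integer and let a, b, c, m be integers with gcd(a, b, c) = 1. Set s := gcd(2n·a, 2b, c) (a positive integer). If s² divides 4·(n·a² + b² + m·c²), then s = 1 or s = 2. -/
/-- If `n` is positive squarefree, `gcd(a, b, c) = 1`, `s = gcd(2na, 2b, c)`, and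
`s² ∣ 4(na² + b² + mc²)`, then `s = 1` or `s = 2`. -/
theorem divisibility_one_or_two
    (n : ℤ) (hn : 0 < n) (hnsf : Squarefree n)
    (a b c m : ℤ) (hg : Int.gcd a (Int.gcd b c : ℤ) = 1)
    (s : ℤ) (hs : s = (Int.gcd (2 * n * a) (Int.gcd (2 * b) c : ℤ) : ℤ))
    (hdvd : s ^ 2 ∣ 4 * (n * a ^ 2 + b ^ 2 + m * c ^ 2)) :
    s = 1 ∨ s = 2 := by
  set t : ℕ := Int.gcd (2 * n * a) (Int.gcd (2 * b) c : ℤ) with htdef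
  -- basic divisibilities
  have hd1 : (t : ℤ) ∣ 2 * n * a := Int.gcd_dvd_left _ _
  have hdg : (t : ℤ) ∣ (Int.gcd (2 * b) c : ℤ) := Int.gcd_dvd_right _ _
  have hd2 : (t : ℤ) ∣ 2 * b := hdg.trans (Int.gcd_dvd_left _ _)
  have hd3 : (t : ℤ) ∣ c := hdg.trans (Int.gcd_dvd_right _ _)
  have hX : ((t : ℤ)) ^ 2 ∣ 4 * (n * a ^ 2 + b ^ 2 + m * c ^ 2) := hs ▸ hdvd
  -- t ≠ 0
  have ht0 : t ≠ 0 := by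
    intro h
    rw [htdef, Int.gcd_eq_zero_iff] at h
    obtain ⟨h1, h2⟩ := h
    have hbc : Int.gcd (2 * b) c = 0 := by exact_mod_cast h2
    rw [Int.gcd_eq_zero_iff] at hbc
    have ha : a = 0 := by
      have : (2 : ℤ) * n ≠ 0 := by positivity
      rcases mul_eq_zero.mp h1 with h | h
      · exact absurd h this
      · exact h
    have hb : b = 0 := by linarith [hbc.1]
    rw [ha, hb, hbc.2] at hg
    simp at hg
  -- no odd prime divides t
  have hodd : ∀ p : ℕ, p.Prime → p ∣ t → p = 2 := by
    intro p hp hpt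
    by_contra hp2
    have hpZ : Prime (p : ℤ) := Nat.prime_iff_prime_int.mp hp
    have hptZ : (p : ℤ) ∣ (t : ℤ) := Int.natCast_dvd_natCast.mpr hpt
    have hpnot2 : ¬ (p : ℤ) ∣ 2 := by
      intro h
      have h' : p ∣ 2 := by exact_mod_cast h
      exact hp2 ((Nat.prime_dvd_prime_iff_eq hp Nat.prime_two).mp h')
    have hpna : (p : ℤ) ∣ n * a := by
      rcases (hpZ.dvd_mul.mp (by rw [mul_assoc] at hd1; exact hptZ.trans hd1)) with h | h
      · exact absurd h hpnot2
      · exact h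
    have hpb : (p : ℤ) ∣ b := by
      rcases hpZ.dvd_mul.mp (hptZ.trans hd2) with h | h
      · exact absurd h hpnot2
      · exact h
    have hpc : (p : ℤ) ∣ c := hptZ.trans hd3
    -- p^2 ∣ X
    have hcop2 : IsCoprime ((p : ℤ) ^ 2) 4 := by
      have h1 : IsCoprime (p : ℤ) 2 := (hpZ.coprime_iff_not_dvd).mpr hpnot2
      have : (4 : ℤ) = 2 ^ 2 := by norm_num
      rw [this]
      exact (h1.pow : IsCoprime ((p:ℤ)^2) (2^2))
    have hp2X : (p : ℤ) ^ 2 ∣ n * a ^ 2 + b ^ 2 + m * c ^ 2 :=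
      hcop2.dvd_of_dvd_mul_left ((pow_dvd_pow_of_dvd hptZ 2).trans hX)
    have hp2na : (p : ℤ) ^ 2 ∣ n * a ^ 2 := by
      have hb2 : (p : ℤ) ^ 2 ∣ b ^ 2 := pow_dvd_pow_of_dvd hpb 2
      have hc2 : (p : ℤ) ^ 2 ∣ m * c ^ 2 := (pow_dvd_pow_of_dvd hpc 2).mul_left m
      have := (hp2X.sub hc2).sub hb2
      rwa [show n * a ^ 2 + b ^ 2 + m * c ^ 2 - m * c ^ 2 - b ^ 2 = n * a ^ 2 by ring] at this
    -- p ∤ a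
    have hpa : ¬ (p : ℤ) ∣ a := by
      intro h
      have : (p : ℤ) ∣ (Int.gcd a (Int.gcd b c : ℤ) : ℤ) :=
        Int.dvd_coe_gcd h (Int.dvd_coe_gcd hpb hpc)
      rw [hg] at this
      exact hpZ.not_dvd_one (by exact_mod_cast this)
    have hcopa : IsCoprime ((p : ℤ) ^ 2) (a ^ 2) :=
      ((hpZ.coprime_iff_not_dvd).mpr hpa).pow
    have hp2n : (p : ℤ) ^ 2 ∣ n := hcopa.dvd_of_dvd_mul_right hp2na
    have := hnsf (p : ℤ) (by rwa [← sq])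
    exact hpZ.not_unit this
  -- 4 does not divide t
  have h4 : ¬ (4 : ℕ) ∣ t := by
    intro h4t
    have h4Z : (4 : ℤ) ∣ (t : ℤ) := by exact_mod_cast Int.natCast_dvd_natCast.mpr h4t
    have h16 : (16 : ℤ) ∣ (t : ℤ) ^ 2 := by
      obtain ⟨k, hk⟩ := h4Z; exact ⟨k ^ 2, by rw [hk]; ring⟩
    have h4X : (4 : ℤ) ∣ n * a ^ 2 + b ^ 2 + m * c ^ 2 := by
      obtain ⟨k, hk⟩ := h16.trans hX
      exact ⟨k, by linarith⟩
    have h2na : (2 : ℤ) ∣ n * a := by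
      obtain ⟨k, hk⟩ := h4Z.trans hd1
      exact ⟨k, by linarith⟩
    have h2b : (2 : ℤ) ∣ b := by
      obtain ⟨k, hk⟩ := h4Z.trans hd2
      exact ⟨k, by linarith⟩
    have h4c : (4 : ℤ) ∣ c := h4Z.trans hd3
    have h4na2 : (4 : ℤ) ∣ n * a ^ 2 := by
      have hb2 : (4 : ℤ) ∣ b ^ 2 := by obtain ⟨k, hk⟩ := h2b; exact ⟨k ^ 2, by rw [hk]; ring⟩
      have hc2 : (4 : ℤ) ∣ m * c ^ 2 := by
        obtain ⟨k, hk⟩ := h4c; exact ⟨m * (4 * k ^ 2), by rw [hk]; ring⟩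
      have := (h4X.sub hc2).sub hb2
      rwa [show n * a ^ 2 + b ^ 2 + m * c ^ 2 - m * c ^ 2 - b ^ 2 = n * a ^ 2 by ring] at this
    have h2a : ¬ (2 : ℤ) ∣ a := by
      intro h
      have h2c : (2 : ℤ) ∣ c := dvd_trans (by norm_num) h4c
      have : (2 : ℤ) ∣ (Int.gcd a (Int.gcd b c : ℤ) : ℤ) :=
        Int.dvd_coe_gcd h (Int.dvd_coe_gcd h2b h2c)
      rw [hg] at this
      norm_num at this
    have hcopa : IsCoprime ((2 : ℤ) ^ 2) (a ^ 2) :=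
      ((Int.prime_two.coprime_iff_not_dvd).mpr h2a).pow
    have h4n : (4 : ℤ) ∣ n := by
      have : ((2 : ℤ) ^ 2) ∣ n * a ^ 2 := by norm_num; exact h4na2
      have := hcopa.dvd_of_dvd_mul_right this
      norm_num at this; exact this
    have := hnsf 2 (by obtain ⟨k, hk⟩ := h4n; exact ⟨k, by linarith⟩)
    exact Int.prime_two.not_unit this
  -- conclude
  have ht := Nat.eq_prime_pow_of_unique_prime_dvd (p := 2) ht0 (fun {d} hd hdt => hodd d hd hdt)
  set k := t.primeFactorsList.length with hk
  match hkk : k with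
  | 0 => left; rw [hs, ht]; norm_num
  | 1 => right; rw [hs, ht]; norm_num
  | (j+2) =>
    exfalso; apply h4
    have : (4 : ℕ) = 2 ^ 2 := by norm_num
    rw [ht, this]
    exact pow_dvd_pow 2 (by omega)
end

section
/- Let n and e be positive integers. Then the following are equivalent: (i) there exist integers a, b, c, m with gcd(a, b, c) = 1, n·a² + b² + m·c² > 0, and e·s² = 4n·(n·a² + b² + m·c²), where s := gcd(2n·a, 2b, c); (ii) there exists an integer x with x² ≡ e (mod 4n) or x² ≡ e − n (mod 4n). -/
private lemma reduce_gcd (n e : ℤ) (hn : 0 < n)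
    (a b c m : ℤ)
    (hpos : 0 < n * a ^ 2 + b ^ 2 + m * c ^ 2)
    (heq : e * ((Int.gcd (2 * n * a) (Int.gcd (2 * b) c : ℤ) : ℤ)) ^ 2 =
      4 * n * (n * a ^ 2 + b ^ 2 + m * c ^ 2)) :
    ∃ a b c m : ℤ, Int.gcd a (Int.gcd b c : ℤ) = 1 ∧
        0 < n * a ^ 2 + b ^ 2 + m * c ^ 2 ∧
        e * ((Int.gcd (2 * n * a) (Int.gcd (2 * b) c : ℤ) : ℤ)) ^ 2 =
          4 * n * (n * a ^ 2 + b ^ 2 + m * c ^ 2) := by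
  set g : ℕ := Int.gcd a (Int.gcd b c : ℤ) with hgdef
  have hg0 : g ≠ 0 := by
    intro h
    obtain ⟨h1, h2⟩ := Int.gcd_eq_zero_iff.mp h
    norm_cast at h2
    obtain ⟨h3, h4⟩ := Int.gcd_eq_zero_iff.mp h2
    rw [h1, h3, h4] at hpos
    norm_num at hpos
  have hga : (g : ℤ) ∣ a := Int.gcd_dvd_left _ _
  have hgb : (g : ℤ) ∣ b := dvd_trans (Int.gcd_dvd_right _ _) (Int.gcd_dvd_left _ _)
  have hgc : (g : ℤ) ∣ c := dvd_trans (Int.gcd_dvd_right _ _) (Int.gcd_dvd_right _ _)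
  obtain ⟨a₀, ha⟩ := hga
  obtain ⟨b₀, hb⟩ := hgb
  obtain ⟨c₀, hc⟩ := hgc
  have key : ∀ x y z : ℤ, Int.gcd ((g:ℤ) * x) ((Int.gcd ((g:ℤ) * y) ((g:ℤ) * z) : ℤ)) =
      g * Int.gcd x (Int.gcd y z : ℤ) := by
    intro x y z
    rw [Int.gcd_mul_left, Int.natAbs_natCast]
    push_cast
    rw [Int.gcd_mul_left, Int.natAbs_natCast]
  have h1 : g = g * Int.gcd a₀ (Int.gcd b₀ c₀ : ℤ) := by
    conv_lhs => rw [hgdef, ha, hb, hc]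
    exact key _ _ _
  have hone : Int.gcd a₀ (Int.gcd b₀ c₀ : ℤ) = 1 := by
    have h2 : g * 1 = g * Int.gcd a₀ (Int.gcd b₀ c₀ : ℤ) := by
      rw [mul_one]; exact h1
    exact (Nat.eq_of_mul_eq_mul_left (Nat.pos_of_ne_zero hg0) h2).symm
  have hS : Int.gcd (2 * n * a) (Int.gcd (2 * b) c : ℤ) =
      g * Int.gcd (2 * n * a₀) (Int.gcd (2 * b₀) c₀ : ℤ) := by
    have e1 : 2 * n * a = (g:ℤ) * (2 * n * a₀) := by rw [ha]; ring
    have e2 : 2 * b = (g:ℤ) * (2 * b₀) := by rw [hb]; ring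
    rw [e1, e2, hc]
    exact key _ _ _
  have hgz : ((g : ℤ)) ^ 2 ≠ 0 := pow_ne_zero _ (Int.natCast_ne_zero.mpr hg0)
  rw [hS, ha, hb, hc] at heq
  push_cast at heq
  rw [ha, hb, hc] at hpos
  refine ⟨a₀, b₀, c₀, m, hone, ?_, ?_⟩
  · by_contra hq
    push_neg at hq
    nlinarith [mul_nonpos_of_nonneg_of_nonpos (sq_nonneg ((g:ℤ))) hq]
  · exact mul_left_cancel₀ hgz (by linear_combination heq)

/-- Nonemptiness criterion for the Heegner divisor `D^{(1)}_{2n,2e}`: there exist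
integers `a, b, c, m` with `gcd(a, b, c) = 1`, `na² + b² + mc² > 0`, and
`e·s² = 4n(na² + b² + mc²)` where `s = gcd(2na, 2b, c)`, if and only if `e` or `e − n`
is a square modulo `4n`. -/
theorem heegner_divisor_nonempty_iff
    (n e : ℤ) (hn : 0 < n) (he : 0 < e) :
    (∃ a b c m : ℤ, Int.gcd a (Int.gcd b c : ℤ) = 1 ∧
        0 < n * a ^ 2 + b ^ 2 + m * c ^ 2 ∧
        e * ((Int.gcd (2 * n * a) (Int.gcd (2 * b) c : ℤ) : ℤ)) ^ 2 =
          4 * n * (n * a ^ 2 + b ^ 2 + m * c ^ 2)) ↔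
      ∃ x : ℤ, x ^ 2 ≡ e [ZMOD 4 * n] ∨ x ^ 2 ≡ e - n [ZMOD 4 * n] := by
  constructor
  · rintro ⟨a, b, c, m, hg, hpos, heq⟩
    set S : ℕ := Int.gcd (2 * n * a) (Int.gcd (2 * b) c : ℤ) with hSdef
    have hS0 : S ≠ 0 := by
      intro h
      obtain ⟨h1, h2⟩ := Int.gcd_eq_zero_iff.mp h
      norm_cast at h2
      obtain ⟨h3, h4⟩ := Int.gcd_eq_zero_iff.mp h2
      have ha0 : a = 0 := by
        rcases mul_eq_zero.mp h1 with h | h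
        · exact absurd h (by positivity)
        · exact h
      have hb0 : b = 0 := by
        rcases mul_eq_zero.mp h3 with h | h
        · norm_num at h
        · exact h
      rw [ha0, hb0, h4] at hpos
      norm_num at hpos
    have hA : (S : ℤ) ∣ 2 * n * a := Int.gcd_dvd_left _ _
    have hB : (S : ℤ) ∣ 2 * b := dvd_trans (Int.gcd_dvd_right _ _) (Int.gcd_dvd_left _ _)
    have hC : (S : ℤ) ∣ c := dvd_trans (Int.gcd_dvd_right _ _) (Int.gcd_dvd_right _ _)
    obtain ⟨A, hA⟩ := hA
    obtain ⟨B, hB⟩ := hB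
    obtain ⟨C, hC⟩ := hC
    have hSz : ((S : ℤ)) ^ 2 ≠ 0 := pow_ne_zero _ (Int.natCast_ne_zero.mpr hS0)
    have hkey : e = A ^ 2 + n * B ^ 2 + 4 * n * m * C ^ 2 := by
      have h2 : e * (S:ℤ) ^ 2 = (A ^ 2 + n * B ^ 2 + 4 * n * m * C ^ 2) * (S:ℤ) ^ 2 := by
        linear_combination heq + (2 * n * a + (S:ℤ) * A) * hA +
          (n * (2 * b + (S:ℤ) * B)) * hB + (4 * n * m * (c + (S:ℤ) * C)) * hC
      exact mul_right_cancel₀ hSz h2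
    rcases Int.even_or_odd B with ⟨t, ht⟩ | ⟨t, ht⟩
    · exact ⟨A, Or.inl (Int.modEq_of_dvd ⟨t ^ 2 + m * C ^ 2, by
        linear_combination hkey + n * (B + t + t) * ht⟩)⟩
    · exact ⟨A, Or.inr (Int.modEq_of_dvd ⟨t ^ 2 + t + m * C ^ 2, by
        linear_combination hkey + n * (B + 2 * t + 1) * ht⟩)⟩
  · rintro ⟨x, hx | hx⟩
    · obtain ⟨k, hk⟩ := Int.modEq_iff_dvd.mp hx
      have hgcd : ((Int.gcd (2 * n * x) (Int.gcd (2 * 0) (2 * n) : ℤ) : ℤ)) = 2 * n := by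
        apply Int.dvd_antisymm (Int.natCast_nonneg _) (by positivity)
        · exact dvd_trans (Int.gcd_dvd_right _ _) (Int.gcd_dvd_right _ _)
        · exact Int.dvd_coe_gcd ⟨x, by ring⟩ (Int.dvd_coe_gcd ⟨0, by ring⟩ dvd_rfl)
      apply reduce_gcd n e hn x 0 (2 * n) k
      · have h1 : n * x ^ 2 + 0 ^ 2 + k * (2 * n) ^ 2 = n * e := by
          linear_combination (-n) * hk
        have h2 := mul_pos hn he
        linarith
      · rw [hgcd]
        linear_combination (4 * n ^ 2) * hk
    · obtain ⟨k, hk⟩ := Int.modEq_iff_dvd.mp hx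
      have hgcd : ((Int.gcd (2 * n * x) (Int.gcd (2 * n) (2 * n) : ℤ) : ℤ)) = 2 * n := by
        apply Int.dvd_antisymm (Int.natCast_nonneg _) (by positivity)
        · exact dvd_trans (Int.gcd_dvd_right _ _) (Int.gcd_dvd_right _ _)
        · exact Int.dvd_coe_gcd ⟨x, by ring⟩ (Int.dvd_coe_gcd dvd_rfl dvd_rfl)
      apply reduce_gcd n e hn x n (2 * n) k
      · have h1 : n * x ^ 2 + n ^ 2 + k * (2 * n) ^ 2 = n * e := by
          linear_combination (-n) * hk
        have h2 := mul_pos hn he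
        linarith
      · rw [hgcd]
        linear_combination (4 * n ^ 2) * hk
end
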